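/- Left application is compatible with composition up to failures equivalence: ⟨P | (Q ; R)⟩ ≈_f ⟨⟨P | Q⟩ | R⟩ for all processes P, Q, R. -/

import Mathlib

set_option linter.unnecessarySeqFocus false

/-! # CCS with simultaneous actions (Abramsky, "Process Realizability") -/

/-- Labels: names (`inl`) and co-names (`inr`). -/
abbrev Label : Type := ℕ ⊕ ℕ

/-- The involution `λ ↦ λ̄` exchanging names and co-names. -/
def Label.bar : Label → Label
  | .inl n => .inr n
  | .inr n => .inl n

/-- Actions: finite sets of labels, performed simultaneously.  `τ = ∅`. -/
abbrev Act : Type := Finset Label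

/-- A renaming: a partial injective function on labels preserving the involution. -/
structure Renaming where
  toFun : Label → Option Label
  inj : ∀ ⦃x y z : Label⦄, toFun x = some z → toFun y = some z → x = y
  bar : ∀ x : Label, toFun (Label.bar x) = (toFun x).map Label.bar

/-- The pointwise extension of a renaming to actions. -/
def Renaming.onAction (f : Renaming) (a : Act) : Act :=
  a.filterMap f.toFun (fun _ _ _ hx hy => f.inj (Option.mem_def.mp hx) (Option.mem_def.mp hy))

/-- Guarded process terms of CCS with simultaneous actions:
prefix, countably-indexed guarded sums (all guards non-`τ`), parallel composition,
restriction, renaming, process variables (de Bruijn) and recursion. -/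
inductive Proc : Type where
  | pre (a : Act) (P : Proc)
  | sum (I : Set ℕ) (act : ℕ → Act) (cont : ℕ → Proc) (hg : ∀ n ∈ I, (act n).Nonempty)
  | par (P Q : Proc)
  | restrict (P : Proc) (L : Set Label)
  | rename (P : Proc) (f : Renaming)
  | var (n : ℕ)
  | fix (P : Proc)

/-- The inactive process `0` (the empty sum). -/
def Proc.nil : Proc := .sum ∅ (fun _ => ∅) (fun _ => .var 0) (by simp)

/-- Substitution of a process for the variable with de Bruijn index `d`. -/
def Proc.subst (R : Proc) : ℕ → Proc → Proc
  | d, .pre a P => .pre a (Proc.subst R d P)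
  | d, .sum I act cont hg => .sum I act (fun n => Proc.subst R d (cont n)) hg
  | d, .par P Q => .par (Proc.subst R d P) (Proc.subst R d Q)
  | d, .restrict P L => .restrict (Proc.subst R d P) L
  | d, .rename P f => .rename (Proc.subst R d P) f
  | d, .var n => if n = d then R else .var n
  | d, .fix P => .fix (Proc.subst R (d + 1) P)

/-- The labelled transition relation, with the generalized synchronization rule
for simultaneous (compound) actions. -/
inductive Step : Proc → Act → Proc → Prop where
  | pre {a P} : Step (.pre a P) a P
  | sum {I act cont hg} (j : ℕ) (hj : j ∈ I) : Step (.sum I act cont hg) (act j) (cont j)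
  | restrict {P a Q L} : Step P a Q → (∀ l ∈ a, l ∉ L ∧ Label.bar l ∉ L) →
      Step (.restrict P L) a (.restrict Q L)
  | rename {P a Q} {f : Renaming} : Step P a Q → (∀ l ∈ a, (f.toFun l).isSome) →
      Step (.rename P f) (f.onAction a) (.rename Q f)
  | fix {P a Q} : Step (Proc.subst (.fix P) 0 P) a Q → Step (.fix P) a Q
  | parL {P a P' Q} : Step P a P' → Step (.par P Q) a (.par P' Q)
  | parR {P Q a Q'} : Step Q a Q' → Step (.par P Q) a (.par P Q')
  | sync {P Q P' Q' a b c} : Step P (a ∪ b) P' → Step Q (b.image Label.bar ∪ c) Q' →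
      Disjoint a b → Disjoint (b.image Label.bar) c → Disjoint a c →
      Step (.par P Q) (a ∪ c) (.par P' Q')

/-- Zero or more silent (`τ`) transitions. -/
def TauStar : Proc → Proc → Prop :=
  Relation.ReflTransGen (fun P Q => Step P ∅ Q)

/-- Observable transition `P ⟹a Q`: `τ* a τ*`. -/
def Obs (P : Proc) (a : Act) (Q : Proc) : Prop :=
  ∃ P₁ P₂, TauStar P P₁ ∧ Step P₁ a P₂ ∧ TauStar P₂ Q

/-- Observable transitions along a string of (non-`τ`) actions. -/
inductive ObsSeq : Proc → List Act → Proc → Prop where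
  | nil {P Q} : TauStar P Q → ObsSeq P [] Q
  | cons {P a Q s R} : Obs P a Q → ObsSeq Q s R → ObsSeq P (a :: s) R

/-- The failures of a process: pairs `(s, X)` with `s` a string of nonempty actions and
`X` a set of nonempty actions such that `P ⟹s Q` for some `Q` refusing every action of `X`. -/
def failures (P : Proc) : Set (List Act × Set Act) :=
  { sX | (∀ a ∈ sX.1, a.Nonempty) ∧ (∀ a ∈ sX.2, a.Nonempty) ∧
      ∃ Q, ObsSeq P sX.1 Q ∧ ∀ a ∈ sX.2, ¬∃ R, Obs Q a R }

/-- Failures equivalence. -/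
def FailEq (P Q : Proc) : Prop := failures P = failures Q

/-- Weak simulations (with respect to the observable transitions). -/
def IsWeakSim (R : Proc → Proc → Prop) : Prop :=
  ∀ ⦃P Q⦄, R P Q →
    (∀ P', TauStar P P' → ∃ Q', TauStar Q Q' ∧ R P' Q') ∧
    (∀ a P', (a : Act).Nonempty → Obs P a P' → ∃ Q', Obs Q a Q' ∧ R P' Q')

/-- Weak bisimilarity. -/
def WeakBisim (P Q : Proc) : Prop :=
  ∃ R : Proc → Proc → Prop, IsWeakSim R ∧ IsWeakSim (fun x y => R y x) ∧ R P Q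
/-! ## The split name space and the basic combinators -/

/-- Build a bar-preserving partial injective renaming from a partial injective map on names. -/
def Renaming.ofNameFun (f : ℕ → Option ℕ)
    (hf : ∀ ⦃x y z : ℕ⦄, f x = some z → f y = some z → x = y) : Renaming where
  toFun := fun l =>
    match l with
    | .inl n => (f n).map .inl
    | .inr n => (f n).map .inr
  inj := by
    rintro (x | x) (y | y) (z | z) hx hy <;>
      simp only [Option.map_eq_some_iff] at hx hy <;>
      obtain ⟨a, ha, ha'⟩ := hx <;> obtain ⟨b, hb, hb'⟩ := hy <;>
        solve
          | (cases ha'; cases hb'; exact congrArg _ (hf ha hb))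
          | (cases hb')
          | (cases ha')
  bar := by
    rintro (n | n) <;> cases hf : f n <;> simp [Label.bar, hf]

/-- The underlying name of a label. -/
def Label.name : Label → ℕ := Sum.elim id id

/-- The injection `l` of the name space onto its "left" half (even names). -/
def lRen : Renaming := Renaming.ofNameFun (fun n => some (2 * n)) (by intro x y z hx hy; simp only [Option.some.injEq] at hx hy; omega)

/-- The injection `r` of the name space onto its "right" half (odd names). -/
def rRen : Renaming := Renaming.ofNameFun (fun n => some (2 * n + 1)) (by intro x y z hx hy; simp only [Option.some.injEq] at hx hy; omega)

/-- The partial inverse `l⁻¹` of `l`. -/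
def lInv : Renaming :=
  Renaming.ofNameFun (fun n => if n % 2 = 0 then some (n / 2) else none)
    (by intro x y z hx hy; try dsimp only at hx hy
        split at hx <;> split at hy <;> simp_all <;> omega)

/-- The partial inverse `r⁻¹` of `r`. -/
def rInv : Renaming :=
  Renaming.ofNameFun (fun n => if n % 2 = 1 then some (n / 2) else none)
    (by intro x y z hx hy; try dsimp only at hx hy
        split at hx <;> split at hy <;> simp_all <;> omega)

/-- The left half `ℒ_l` of the label space. -/
def LabL : Set Label := {x | x.name % 2 = 0}

/-- The right half `ℒ_r` of the label space. -/
def LabR : Set Label := {x | x.name % 2 = 1}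

/-- Tensor product: disjoint (non-communicating) parallel composition `P[l] | Q[r]`. -/
def tensor (P Q : Proc) : Proc := .par (P.rename lRen) (Q.rename rRen)

/-- Left (forwards) application `⟨Q | P⟩ = ((Q[l] | P) ∖ ℒ_l)[r⁻¹]`. -/
def lapp (Q P : Proc) : Proc := ((Proc.par (Q.rename lRen) P).restrict LabL).rename rInv

/-- Right (reverse) application `(P | R⟩ = ((P | R[r]) ∖ ℒ_r)[l⁻¹]`. -/
def rapp (P R : Proc) : Proc := ((Proc.par P (R.rename rRen)).restrict LabR).rename lInv

/-! ### The three-fold decomposition `𝒩 = 𝒩₁ ∪̇ 𝒩₂ ∪̇ 𝒩₃` and composition -/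

/-- `φ₁₂ : 𝒩 ≅ 𝒩₁ ∪̇ 𝒩₂` (`𝒩ᵢ` = names `≡ i - 1 (mod 3)`), carrying `𝒩_l` onto `𝒩₁`, `𝒩_r` onto `𝒩₂`. -/
def phi12 : Renaming :=
  Renaming.ofNameFun (fun n => some (if n % 2 = 0 then 3 * (n / 2) else 3 * (n / 2) + 1))
    (by intro x y z hx hy; try dsimp only at hx hy
        simp only [Option.some.injEq] at hx hy
        split at hx <;> split at hy <;> omega)

/-- `φ₂₃ : 𝒩 ≅ 𝒩₂ ∪̇ 𝒩₃`, carrying `𝒩_l` onto `𝒩₂`, `𝒩_r` onto `𝒩₃`. -/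
def phi23 : Renaming :=
  Renaming.ofNameFun (fun n => some (if n % 2 = 0 then 3 * (n / 2) + 1 else 3 * (n / 2) + 2))
    (by intro x y z hx hy; try dsimp only at hx hy
        simp only [Option.some.injEq] at hx hy
        split at hx <;> split at hy <;> omega)

/-- The partial inverse `φ₁₃⁻¹` of `φ₁₃ : 𝒩 ≅ 𝒩₁ ∪̇ 𝒩₃`. -/
def phi13Inv : Renaming :=
  Renaming.ofNameFun
    (fun n => if n % 3 = 0 then some (2 * (n / 3)) else if n % 3 = 2 then some (2 * (n / 3) + 1) else none)
    (by intro x y z hx hy; try dsimp only at hx hy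
        split at hx <;> split at hy <;> simp_all <;> omega)

/-- The middle part `𝒩₂` of the label space (as a set of labels). -/
def Lab2 : Set Label := {x | x.name % 3 = 1}

/-- Composition `P ; Q = ((P[φ₁₂] | Q[φ₂₃]) ∖ 𝒩₂)[φ₁₃⁻¹]`. -/
def comp (P Q : Proc) : Proc :=
  ((Proc.par (P.rename phi12) (Q.rename phi23)).restrict Lab2).rename phi13Inv

/-! ### The identity (wire) process -/

/-- The identity process `I = rec X. Σ_{a ∈ Act₊} (l(a) ∪ r(a)‾).X`. -/
noncomputable def Iproc : Proc :=
  .fix (.sum {n | ∃ a : Act, (Encodable.decode n : Option Act) = some a ∧ a.Nonempty}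
    (fun n =>
      match (Encodable.decode n : Option Act) with
      | some a => lRen.onAction a ∪ (rRen.onAction a).image Label.bar
      | none => {Sum.inl 0})
    (fun _ => .var 0)
    (by rintro n ⟨a, ha, hne⟩
        simp only [ha]
        obtain ⟨x, hx⟩ := hne
        refine Finset.Nonempty.mono Finset.subset_union_left ⟨(Sum.map (2 * ·) (2 * ·)) x, ?_⟩
        simp only [Renaming.onAction, Finset.mem_filterMap]
        exact ⟨x, hx, by cases x <;> rfl⟩))

/-! ## Guarded choice combinators, the additive pairing and injections, `!P`, divergence -/

/-- Binary guarded sum `a.P + b.Q` (guards must be non-`τ`). -/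
def gsum2 (a : Act) (P : Proc) (b : Act) (Q : Proc) (ha : a.Nonempty) (hb : b.Nonempty) : Proc :=
  .sum {0, 1} (fun n => if n = 0 then a else b) (fun n => if n = 0 then P else Q)
    (by intro n _; (try dsimp only); split <;> assumption)

/-- Ternary guarded sum `a.P + b.Q + c.R`. -/
def gsum3 (a : Act) (P : Proc) (b : Act) (Q : Proc) (c : Act) (R : Proc)
    (ha : a.Nonempty) (hb : b.Nonempty) (hc : c.Nonempty) : Proc :=
  .sum {0, 1, 2} (fun n => if n = 0 then a else if n = 1 then b else c)
    (fun n => if n = 0 then P else if n = 1 then Q else R)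
    (by intro n _; (try dsimp only); split <;> [skip; split] <;> assumption)

/-- The distinguished names: `α = 0`, `β = 1`, `ω = 2`, `δ = 3`, `γ = 4`, `σ = 5`. -/
def αAct : Act := {Sum.inl 0}
def βAct : Act := {Sum.inl 1}
def αBar : Act := {Sum.inr 0}
def βBar : Act := {Sum.inr 1}
def ωAct : Act := {Sum.inl 2}
def δBar : Act := {Sum.inr 3}
def γBar : Act := {Sum.inr 4}

/-- The additive pairing `⟨P, Q⟩ = r(α).P + r(β).Q`  (`r(α) = 1`, `r(β) = 3`). -/
def pairR (P Q : Proc) : Proc :=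
  gsum2 {Sum.inl 1} P {Sum.inl 3} Q (Finset.singleton_nonempty _) (Finset.singleton_nonempty _)

/-- The plain additive pairing `α.P + β.Q` used in the realizability clauses for `&`. -/
def pairProc (P Q : Proc) : Proc :=
  gsum2 αAct P βAct Q (Finset.singleton_nonempty _) (Finset.singleton_nonempty _)

/-- The left injection `l(P) = l(α)‾.P`  (`l(α) = 0`). -/
def injl (P : Proc) : Proc := .pre {Sum.inr 0} P

/-- The right injection `r(Q) = r(β)‾.Q`  (`r(β) = 3`). -/
def injr (Q : Proc) : Proc := .pre {Sum.inr 3} Q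

/-- The exponential combinator `!P = rec X.(ω.0 + δ.P + γ.(X[l] | X[r]))`. -/
def bangProc (P : Proc) : Proc :=
  .fix (gsum3 ωAct Proc.nil ({Sum.inl 3} : Act) P ({Sum.inl 4} : Act)
    (.par (Proc.rename (.var 0) lRen) (Proc.rename (.var 0) rRen))
    (Finset.singleton_nonempty _) (Finset.singleton_nonempty _) (Finset.singleton_nonempty _))

/-- `P` diverges if there is an infinite sequence of `τ`-transitions from `P`. -/
def Diverges (P : Proc) : Prop :=
  ∃ f : ℕ → Proc, f 0 = P ∧ ∀ n, Step (f n) ∅ (f (n + 1))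

/-- `P ⊥ Q`: closing the system, `P` and `Q` interacting with each other yield no divergence. -/
def Orth (P Q : Proc) : Prop := ¬ Diverges ((Proc.par P Q).restrict Set.univ)

/-! ## Auxiliary machinery for `lapp_comp_failures` -/

namespace LappComp

def pe (x : Label) : Prop := x.name % 2 = 0
def po (x : Label) : Prop := x.name % 2 = 1

instance : DecidablePred pe := fun x => by unfold pe; infer_instance
instance : DecidablePred po := fun x => by unfold po; infer_instance

def g12 (n : ℕ) : ℕ := if n % 2 = 0 then 3 * (n / 2) else 3 * (n / 2) + 1
def g23 (n : ℕ) : ℕ := if n % 2 = 0 then 3 * (n / 2) + 1 else 3 * (n / 2) + 2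
def h13 (n : ℕ) : ℕ := if n % 3 = 0 then 2 * (n / 3) else 2 * (n / 3) + 1

def eL : Label → Label := Sum.map (fun n => 2 * n) (fun n => 2 * n)
def halfL : Label → Label := Sum.map (fun n => n / 2) (fun n => n / 2)
def f12 : Label → Label := Sum.map g12 g12
def f23 : Label → Label := Sum.map g23 g23
def h13L : Label → Label := Sum.map h13 h13

lemma name_smap (f : ℕ → ℕ) (x : Label) : Label.name (Sum.map f f x) = f (Label.name x) := by
  cases x <;> rfl

lemma bar_smap (f : ℕ → ℕ) (x : Label) :
    Label.bar (Sum.map f f x) = Sum.map f f (Label.bar x) := by cases x <;> rfl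

lemma name_bar (x : Label) : (Label.bar x).name = x.name := by cases x <;> rfl

lemma name_eL (x : Label) : (eL x).name = 2 * x.name := name_smap _ x
lemma name_halfL (x : Label) : (halfL x).name = x.name / 2 := name_smap _ x
lemma name_f12 (x : Label) : (f12 x).name = g12 x.name := name_smap _ x
lemma name_f23 (x : Label) : (f23 x).name = g23 x.name := name_smap _ x
lemma name_h13L (x : Label) : (h13L x).name = h13 x.name := name_smap _ x

lemma mem_LabL {x : Label} : x ∈ LabL ↔ x.name % 2 = 0 := Iff.rfl
lemma mem_Lab2 {x : Label} : x ∈ Lab2 ↔ x.name % 3 = 1 := Iff.rfl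

lemma onAction_eq (f : Renaming) (p : Label → Prop) [DecidablePred p] (g : Label → Label)
    (a : Act) (h : ∀ x, f.toFun x = if p x then some (g x) else none) :
    f.onAction a = (a.filter p).image g := by
  ext y
  simp only [Renaming.onAction, Finset.mem_filterMap, Finset.mem_image, Finset.mem_filter]
  constructor
  · rintro ⟨x, hx, hfx⟩
    rw [h x] at hfx
    split at hfx
    · exact ⟨x, ⟨hx, by assumption⟩, by injection hfx⟩
    · cases hfx
  · rintro ⟨x, ⟨hx, hp⟩, rfl⟩
    exact ⟨x, hx, by rw [h x, if_pos hp]⟩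

lemma lRen_toFun (x : Label) : lRen.toFun x = some (eL x) := by cases x <;> rfl

lemma phi12_toFun (x : Label) : phi12.toFun x = some (f12 x) := by cases x <;> rfl

lemma phi23_toFun (x : Label) : phi23.toFun x = some (f23 x) := by cases x <;> rfl

lemma rInv_toFun (x : Label) : rInv.toFun x = if po x then some (halfL x) else none := by
  cases x <;>
    (simp only [rInv, Renaming.ofNameFun, po, halfL, Label.name, Sum.map, Sum.elim, id] <;>
      split <;> simp_all)

lemma phi13Inv_toFun (x : Label) :
    phi13Inv.toFun x = if x.name % 3 ≠ 1 then some (h13L x) else none := by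
  have aux : ∀ n : ℕ, (if n % 3 = 0 then some (2 * (n / 3)) else
      if n % 3 = 2 then some (2 * (n / 3) + 1) else none) =
      if n % 3 ≠ 1 then some (h13 n) else none := by
    intro n; unfold h13; split_ifs <;> first | rfl | omega
  cases x <;>
    simp only [phi13Inv, Renaming.ofNameFun, h13L, Label.name, Sum.map, Sum.elim, id, aux] <;>
    split <;> simp_all

lemma onAction_lRen (a : Act) : lRen.onAction a = a.image eL := by
  rw [onAction_eq lRen (fun _ => True) eL a (fun x => by rw [lRen_toFun, if_pos trivial]),
    Finset.filter_true]

lemma onAction_phi12 (a : Act) : phi12.onAction a = a.image f12 := by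
  rw [onAction_eq phi12 (fun _ => True) f12 a (fun x => by rw [phi12_toFun, if_pos trivial]),
    Finset.filter_true]

lemma onAction_phi23 (a : Act) : phi23.onAction a = a.image f23 := by
  rw [onAction_eq phi23 (fun _ => True) f23 a (fun x => by rw [phi23_toFun, if_pos trivial]),
    Finset.filter_true]

lemma onAction_rInv (a : Act) : rInv.onAction a = (a.filter po).image halfL :=
  onAction_eq rInv po halfL a rInv_toFun

lemma onAction_phi13Inv (a : Act) :
    phi13Inv.onAction a = (a.filter (fun x => x.name % 3 ≠ 1)).image h13L :=
  onAction_eq phi13Inv _ h13L a phi13Inv_toFun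

end LappComp

namespace LappComp

lemma h13L_f12 {x : Label} (h : pe x) : h13L (f12 x) = x := by
  have : ∀ n : ℕ, n % 2 = 0 → h13 (g12 n) = n := by
    intro n hn; unfold h13 g12; split_ifs <;> omega
  unfold pe at h
  cases x with
  | inl n => exact congrArg Sum.inl (this n h)
  | inr n => exact congrArg Sum.inr (this n h)

lemma h13L_f23 {x : Label} (h : po x) : h13L (f23 x) = x := by
  have : ∀ n : ℕ, n % 2 = 1 → h13 (g23 n) = n := by
    intro n hn; unfold h13 g23; split_ifs <;> omega
  unfold po at h
  cases x with
  | inl n => exact congrArg Sum.inl (this n h)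
  | inr n => exact congrArg Sum.inr (this n h)

lemma f23_bar_eL_halfL {x : Label} (h : po x) :
    f23 (Label.bar (eL (halfL x))) = Label.bar (f12 x) := by
  have : ∀ n : ℕ, n % 2 = 1 → g23 (2 * (n / 2)) = g12 n := by
    intro n hn; unfold g23 g12; split_ifs <;> omega
  unfold po at h
  cases x with
  | inl n => exact congrArg Sum.inr (this n h)
  | inr n => exact congrArg Sum.inl (this n h)

lemma g12_inj : Function.Injective g12 := by
  intro a b h; unfold g12 at h; split_ifs at h <;> omega

lemma g23_inj : Function.Injective g23 := by
  intro a b h; unfold g23 at h; split_ifs at h <;> omega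

lemma f12_inj : Function.Injective f12 := Function.Injective.sumMap g12_inj g12_inj
lemma f23_inj : Function.Injective f23 := Function.Injective.sumMap g23_inj g23_inj

lemma pe_or_po (x : Label) : pe x ∨ po x := by unfold pe po; omega

lemma filter_pe_union_po (s : Act) : s.filter pe ∪ s.filter po = s := by
  ext x
  simp only [Finset.mem_union, Finset.mem_filter]
  rcases pe_or_po x with h | h <;> tauto

lemma sdiff_po_eq_pe (s : Act) : s \ s.filter po = s.filter pe := by
  ext x
  simp only [Finset.mem_sdiff, Finset.mem_filter, pe, po, not_and]
  constructor
  · rintro ⟨hx, h⟩; exact ⟨hx, by by_contra hc; exact h hx (by omega)⟩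
  · rintro ⟨hx, h⟩; exact ⟨hx, fun _ h2 => by omega⟩

/-! ### Inversion lemmas for `Step` -/

lemma step_rename_inv {P : Proc} {f : Renaming} {α : Act} {S : Proc}
    (h : Step (.rename P f) α S) :
    ∃ a Q, Step P a Q ∧ (∀ l ∈ a, (f.toFun l).isSome) ∧ α = f.onAction a ∧ S = .rename Q f := by
  cases h; exact ⟨_, _, ‹_›, ‹_›, rfl, rfl⟩

lemma step_restrict_inv {P : Proc} {L : Set Label} {α : Act} {S : Proc}
    (h : Step (.restrict P L) α S) :
    ∃ Q, Step P α Q ∧ (∀ l ∈ α, l ∉ L ∧ Label.bar l ∉ L) ∧ S = .restrict Q L := by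
  cases h; exact ⟨_, ‹_›, ‹_›, rfl⟩

lemma step_par_inv {P Q : Proc} {α : Act} {S : Proc} (h : Step (.par P Q) α S) :
    (∃ P', Step P α P' ∧ S = .par P' Q) ∨ (∃ Q', Step Q α Q' ∧ S = .par P Q') ∨
    (∃ a b c P' Q', Step P (a ∪ b) P' ∧ Step Q (b.image Label.bar ∪ c) Q' ∧ Disjoint a b ∧
      Disjoint (b.image Label.bar) c ∧ Disjoint a c ∧ α = a ∪ c ∧ S = .par P' Q') := by
  cases h with
  | parL h => exact .inl ⟨_, h, rfl⟩
  | parR h => exact .inr (.inl ⟨_, h, rfl⟩)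
  | sync h1 h2 d1 d2 d3 => exact .inr (.inr ⟨_, _, _, _, _, h1, h2, d1, d2, d3, rfl, rfl⟩)

lemma step_cast {X : Proc} {β α : Act} {Y : Proc} (h : Step X β Y) (e : β = α) :
    Step X α Y := e ▸ h

/-! ### Optional steps and the transfer conditions -/

def OStep (X : Proc) : Option Act → Proc → Prop
  | none, Y => Y = X
  | some a, Y => Step X a Y

abbrev LCond (u v : Option Act) (α : Act) : Prop :=
  ¬(u = none ∧ v = none) ∧
  (v.getD ∅).filter pe = (u.getD ∅).image (fun x => Label.bar (eL x)) ∧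
  α = ((v.getD ∅).filter po).image halfL

abbrev CCond (u v : Option Act) (β : Act) : Prop :=
  ¬(u = none ∧ v = none) ∧
  (v.getD ∅).filter pe
    = ((u.getD ∅).filter po).image (fun x => Label.bar (eL (halfL x))) ∧
  β = (u.getD ∅).filter pe ∪ (v.getD ∅).filter po

abbrev TCond (u v w : Option Act) (α : Act) : Prop :=
  ¬(u = none ∧ v = none ∧ w = none) ∧
  (v.getD ∅).filter pe = (u.getD ∅).image (fun x => Label.bar (eL x)) ∧
  (w.getD ∅).filter pe
    = ((v.getD ∅).filter po).image (fun x => Label.bar (eL (halfL x))) ∧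
  α = ((w.getD ∅).filter po).image halfL

end LappComp

namespace LappComp

lemma disj_pe_po (s t : Act) : Disjoint (s.filter pe) (t.filter po) := by
  rw [Finset.disjoint_left]
  intro a ha hb
  have h1 := (Finset.mem_filter.mp ha).2
  have h2 := (Finset.mem_filter.mp hb).2
  unfold pe at h1; unfold po at h2; omega

lemma lapp_step_iff {A B S : Proc} {α : Act} :
    Step (lapp A B) α S ↔
      ∃ u v A' B', OStep A u A' ∧ OStep B v B' ∧ S = lapp A' B' ∧ LCond u v α := by
  constructor
  · intro h
    unfold lapp at h
    obtain ⟨β, X, h1, _, rfl, rfl⟩ := step_rename_inv h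
    obtain ⟨Y, h2, hres, rfl⟩ := step_restrict_inv h1
    rcases step_par_inv h2 with ⟨A₂, h3, rfl⟩ | ⟨B₂, h3, rfl⟩ |
      ⟨a, b, c, A₂, B₂, hA, hB, d1, d2, d3, rfl, rfl⟩
    · obtain ⟨u, A₃, h4, _, rfl, rfl⟩ := step_rename_inv h3
      have hu : u = ∅ := by
        rw [onAction_lRen] at hres
        refine Finset.eq_empty_iff_forall_notMem.mpr fun x hx => ?_
        exact (hres _ (Finset.mem_image_of_mem _ hx)).1 (by rw [mem_LabL, name_eL]; omega)
      subst hu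
      refine ⟨some ∅, none, A₃, B, h4, rfl, rfl, by simp, by simp, ?_⟩
      simp [onAction_lRen, onAction_rInv]
    · refine ⟨none, some β, A, B₂, rfl, h3, rfl, by simp, ?_, ?_⟩
      · have hb : β.filter pe = ∅ := by
          refine Finset.filter_false_of_mem fun x hx => ?_
          have := (hres x hx).1
          rw [mem_LabL] at this
          unfold pe; omega
        simp [hb]
      · simp [onAction_rInv]
    · obtain ⟨u, A₃, h4, _, hab, rfl⟩ := step_rename_inv hA
      rw [onAction_lRen] at hab
      have ha : a = ∅ := by
        refine Finset.eq_empty_iff_forall_notMem.mpr fun x hx => ?_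
        have hx1 : x ∈ u.image eL := by
          rw [← hab]; exact Finset.mem_union_left _ hx
        obtain ⟨y, _, rfl⟩ := Finset.mem_image.mp hx1
        have := (hres _ (Finset.mem_union_left _ hx)).1
        rw [mem_LabL, name_eL] at this
        omega
      subst ha
      rw [Finset.empty_union] at hab
      refine ⟨some u, some (b.image Label.bar ∪ c), A₃, B₂, h4, hB, rfl, by simp, ?_, ?_⟩
      · show (b.image Label.bar ∪ c).filter pe = u.image fun x => Label.bar (eL x)
        have hc : c.filter pe = ∅ :=
          Finset.filter_false_of_mem fun x hx => by
            have := (hres _ (Finset.mem_union_right _ hx)).1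
            rw [mem_LabL] at this; unfold pe; omega
        have hbb : (b.image Label.bar).filter pe = b.image Label.bar :=
          Finset.filter_true_of_mem fun x hx => by
            obtain ⟨y, hy, rfl⟩ := Finset.mem_image.mp hx
            have hy2 : y ∈ u.image eL := hab ▸ hy
            obtain ⟨z, _, rfl⟩ := Finset.mem_image.mp hy2
            show pe (Label.bar (eL z))
            unfold pe; rw [name_bar, name_eL]; omega
        rw [Finset.filter_union, hc, hbb, Finset.union_empty, hab, Finset.image_image]
        rfl
      · show rInv.onAction (∅ ∪ c) = _
        rw [Finset.empty_union, onAction_rInv]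
        have hbb : (b.image Label.bar).filter po = ∅ :=
          Finset.filter_false_of_mem fun x hx => by
            obtain ⟨y, hy, rfl⟩ := Finset.mem_image.mp hx
            have hy2 : y ∈ u.image eL := hab ▸ hy
            obtain ⟨z, _, rfl⟩ := Finset.mem_image.mp hy2
            show ¬ po (Label.bar (eL z))
            unfold po; rw [name_bar, name_eL]; omega
        have hcc : c.filter po = c :=
          Finset.filter_true_of_mem fun x hx => by
            have := (hres _ (Finset.mem_union_right _ hx)).1
            rw [mem_LabL] at this; unfold po; omega
        rw [Option.getD_some, Finset.filter_union, hbb, hcc, Finset.empty_union]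
  · rintro ⟨u, v, A', B', hA, hB, rfl, hst, hev, hal⟩
    rcases u with _ | x <;> rcases v with _ | y
    · exact absurd ⟨rfl, rfl⟩ hst
    · -- only `B` moves
      simp only [Option.getD_none, Option.getD_some] at hev hal
      have hAA : A' = A := hA
      subst hAA
      have hy : ∀ l ∈ y, l.name % 2 = 1 := by
        intro l hl
        rcases pe_or_po l with hp | hp
        · exfalso
          have hmem : l ∈ y.filter pe := Finset.mem_filter.mpr ⟨hl, hp⟩
          rw [hev] at hmem; simp at hmem
        · exact hp
      unfold lapp
      refine step_cast (Step.rename (Step.restrict (Step.parR (hB : Step B y B')) ?_) ?_) ?_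
      · intro l hl
        constructor
        · rw [mem_LabL]; have := hy l hl; omega
        · rw [mem_LabL, name_bar]; have := hy l hl; omega
      · intro l hl
        have hpo : po l := hy l hl
        rw [rInv_toFun, if_pos hpo]; rfl
      · rw [onAction_rInv]; exact hal.symm
    · -- only `A` moves (with an empty action)
      simp only [Option.getD_some, Option.getD_none] at hev hal
      have hBB : B' = B := hB
      subst hBB
      rw [Finset.filter_empty] at hev
      have hx : x = ∅ := Finset.image_eq_empty.mp hev.symm
      subst hx
      rw [Finset.filter_empty, Finset.image_empty] at hal
      have s1 : Step (A.rename lRen) ∅ (A'.rename lRen) := by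
        refine step_cast (Step.rename (hA : Step A ∅ A') fun l hl => ?_) ?_
        · simp at hl
        · rw [onAction_lRen, Finset.image_empty]
      unfold lapp
      refine step_cast (Step.rename (Step.restrict (Step.parL s1) ?_) ?_) ?_
      · intro l hl; simp at hl
      · intro l hl; simp at hl
      · rw [onAction_rInv, Finset.filter_empty, Finset.image_empty]; exact hal.symm
    · -- both move and synchronize
      simp only [Option.getD_some] at hev hal
      have hbar : (x.image eL).image Label.bar = y.filter pe := by
        rw [Finset.image_image]; exact hev.symm
      have s1 : Step (A.rename lRen) (∅ ∪ x.image eL) (A'.rename lRen) := by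
        refine step_cast (Step.rename (hA : Step A x A') fun l _ => ?_) ?_
        · rw [lRen_toFun]; rfl
        · rw [onAction_lRen, Finset.empty_union]
      have s2 : Step B ((x.image eL).image Label.bar ∪ y.filter po) B' :=
        step_cast (hB : Step B y B') (by rw [hbar]; exact (filter_pe_union_po y).symm)
      unfold lapp
      refine step_cast (Step.rename (Step.restrict (Step.sync s1 s2 ?_ ?_ ?_) ?_) ?_) ?_
      · simp
      · rw [hbar]; exact disj_pe_po y y
      · simp
      · intro l hl
        rw [Finset.empty_union, Finset.mem_filter] at hl
        have := hl.2; unfold po at this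
        constructor
        · rw [mem_LabL]; omega
        · rw [mem_LabL, name_bar]; omega
      · intro l hl
        rw [Finset.empty_union] at hl
        rw [rInv_toFun, if_pos (Finset.mem_filter.mp hl).2]; rfl
      · rw [Finset.empty_union, onAction_rInv,
          Finset.filter_true_of_mem (fun x hx => (Finset.mem_filter.mp hx).2)]
        exact hal.symm

end LappComp

namespace LappComp

lemma image_cancel {f : Label → Label} (hf : Function.Injective f) {s t : Act}
    (h : s.image f = t.image f) : s = t := by
  ext x
  constructor <;> intro hx
  · have hm : f x ∈ t.image f := h ▸ Finset.mem_image_of_mem f hx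
    obtain ⟨y, hy, hxy⟩ := Finset.mem_image.mp hm
    exact (hf hxy) ▸ hy
  · have hm : f x ∈ s.image f := h ▸ Finset.mem_image_of_mem f hx
    obtain ⟨y, hy, hxy⟩ := Finset.mem_image.mp hm
    exact (hf hxy) ▸ hy

lemma mod3_f12_pe {x : Label} (h : pe x) : (f12 x).name % 3 = 0 := by
  rw [name_f12]; unfold pe at h; unfold g12; rw [if_pos h]; omega
lemma mod3_f12_po {x : Label} (h : po x) : (f12 x).name % 3 = 1 := by
  rw [name_f12]; unfold po at h; unfold g12; rw [if_neg (by omega)]; omega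
lemma mod3_f23_pe {x : Label} (h : pe x) : (f23 x).name % 3 = 1 := by
  rw [name_f23]; unfold pe at h; unfold g23; rw [if_pos h]; omega
lemma mod3_f23_po {x : Label} (h : po x) : (f23 x).name % 3 = 2 := by
  rw [name_f23]; unfold po at h; unfold g23; rw [if_neg (by omega)]; omega

lemma disj_by_mod3 {s t : Act} {f g : Label → Label} {i j : ℕ} (hij : i ≠ j)
    (hf : ∀ x ∈ s, (f x).name % 3 = i) (hg : ∀ x ∈ t, (g x).name % 3 = j) :
    Disjoint (s.image f) (t.image g) := by
  rw [Finset.disjoint_left]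
  rintro x hx hy
  obtain ⟨a, ha, rfl⟩ := Finset.mem_image.mp hx
  obtain ⟨b, hb, hba⟩ := Finset.mem_image.mp hy
  exact hij ((hf a ha).symm.trans (by rw [← hba]; exact hg b hb))

lemma comp_step_iff {A B S : Proc} {β : Act} :
    Step (comp A B) β S ↔
      ∃ u v A' B', OStep A u A' ∧ OStep B v B' ∧ S = comp A' B' ∧ CCond u v β := by
  constructor
  · intro h
    unfold comp at h
    obtain ⟨γ, X, h1, _, rfl, rfl⟩ := step_rename_inv h
    obtain ⟨Y, h2, hres, rfl⟩ := step_restrict_inv h1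
    rcases step_par_inv h2 with ⟨A₂, h3, rfl⟩ | ⟨B₂, h3, rfl⟩ |
      ⟨a, b, c, A₂, B₂, hA, hB, d1, d2, d3, rfl, rfl⟩
    · -- only A moves
      obtain ⟨V, A₃, h4, _, rfl, rfl⟩ := step_rename_inv h3
      rw [onAction_phi12] at hres
      have hVod : V.filter po = ∅ := by
        refine Finset.filter_false_of_mem fun x hx hp => ?_
        have hm := (hres _ (Finset.mem_image_of_mem f12 hx)).1
        rw [mem_Lab2] at hm
        exact hm (mod3_f12_po hp)
      have hVpe : ∀ x ∈ V, pe x := fun x hx => by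
        rcases pe_or_po x with h | h
        · exact h
        · exfalso
          have hm : x ∈ V.filter po := Finset.mem_filter.mpr ⟨hx, h⟩
          rw [hVod] at hm; simp at hm
      refine ⟨some V, none, A₃, B, h4, rfl, rfl, by simp, by simp [hVod], ?_⟩
      simp only [Option.getD_some, Option.getD_none, Finset.filter_empty, Finset.union_empty]
      rw [onAction_phi12, onAction_phi13Inv,
        Finset.filter_true_of_mem (fun x hx => ?_), Finset.image_image]
      · have e2 : Finset.image (h13L ∘ f12) V = V :=
          (Finset.image_congr fun x hx => h13L_f12 (hVpe x hx)).trans Finset.image_id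
        rw [e2, Finset.filter_true_of_mem hVpe]
      · obtain ⟨y, hy, rfl⟩ := Finset.mem_image.mp hx
        rw [mod3_f12_pe (hVpe y hy)]; omega
    · -- only B moves
      obtain ⟨W, B₃, h4, _, rfl, rfl⟩ := step_rename_inv h3
      rw [onAction_phi23] at hres
      have hWev : W.filter pe = ∅ := by
        refine Finset.filter_false_of_mem fun x hx hp => ?_
        have hm := (hres _ (Finset.mem_image_of_mem f23 hx)).1
        rw [mem_Lab2] at hm
        exact hm (mod3_f23_pe hp)
      have hWpo : ∀ x ∈ W, po x := fun x hx => by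
        rcases pe_or_po x with h | h
        · exfalso
          have hm : x ∈ W.filter pe := Finset.mem_filter.mpr ⟨hx, h⟩
          rw [hWev] at hm; simp at hm
        · exact h
      refine ⟨none, some W, A, B₃, rfl, h4, rfl, by simp, by simp [hWev], ?_⟩
      simp only [Option.getD_some, Option.getD_none, Finset.filter_empty, Finset.empty_union]
      rw [onAction_phi23, onAction_phi13Inv,
        Finset.filter_true_of_mem (fun x hx => ?_), Finset.image_image]
      · have e2 : Finset.image (h13L ∘ f23) W = W :=
          (Finset.image_congr fun x hx => h13L_f23 (hWpo x hx)).trans Finset.image_id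
        rw [e2, Finset.filter_true_of_mem hWpo]
      · obtain ⟨y, hy, rfl⟩ := Finset.mem_image.mp hx
        rw [mod3_f23_po (hWpo y hy)]; omega
    · -- synchronization
      obtain ⟨V, A₃, h4, _, hab, rfl⟩ := step_rename_inv hA
      obtain ⟨W, B₃, h5, _, hcd, rfl⟩ := step_rename_inv hB
      rw [onAction_phi12] at hab
      rw [onAction_phi23] at hcd
      have hb : b = (V.filter po).image f12 := by
        ext x
        constructor
        · intro hx
          have hx1 : x ∈ V.image f12 := by rw [← hab]; exact Finset.mem_union_right _ hx
          obtain ⟨y, hy, rfl⟩ := Finset.mem_image.mp hx1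
          have hx2 : Label.bar (f12 y) ∈ W.image f23 := by
            rw [← hcd]; exact Finset.mem_union_left _ (Finset.mem_image_of_mem _ hx)
          obtain ⟨z, _, hzz⟩ := Finset.mem_image.mp hx2
          have hnm : g23 z.name = g12 y.name := by
            have := congrArg Label.name hzz
            rwa [name_f23, name_bar, name_f12] at this
          have hpo : po y := by
            unfold po; unfold g12 g23 at hnm; split_ifs at hnm <;> omega
          exact Finset.mem_image_of_mem _ (Finset.mem_filter.mpr ⟨hy, hpo⟩)
        · intro hx
          obtain ⟨y, hy, rfl⟩ := Finset.mem_image.mp hx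
          obtain ⟨hy1, hy2⟩ := Finset.mem_filter.mp hy
          have hx1 : f12 y ∈ a ∪ b := by rw [hab]; exact Finset.mem_image_of_mem _ hy1
          rcases Finset.mem_union.mp hx1 with h | h
          · exfalso
            have hm := (hres _ (Finset.mem_union_left _ h)).1
            rw [mem_Lab2] at hm
            exact hm (mod3_f12_po hy2)
          · exact h
      have ha : a = (V.filter pe).image f12 := by
        have h1 : a = (V.image f12) \ b := by
          ext x
          simp only [Finset.mem_sdiff]
          constructor
          · intro hx
            exact ⟨by rw [← hab]; exact Finset.mem_union_left _ hx,
              Finset.disjoint_left.mp d1 hx⟩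
          · rintro ⟨hx1, hx2⟩
            rcases Finset.mem_union.mp (hab ▸ hx1) with h | h
            · exact h
            · exact absurd h hx2
        rw [h1, hb, ← Finset.image_sdiff _ _ f12_inj, sdiff_po_eq_pe]
      have hc : c = (W.filter po).image f23 := by
        ext x
        constructor
        · intro hx
          have hx1 : x ∈ W.image f23 := by rw [← hcd]; exact Finset.mem_union_right _ hx
          obtain ⟨z, hz, rfl⟩ := Finset.mem_image.mp hx1
          have hL : ¬ (f23 z).name % 3 = 1 := by
            have := (hres _ (Finset.mem_union_right _ hx)).1
            rwa [mem_Lab2] at this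
          have hpo : po z := by
            rcases pe_or_po z with h | h
            · exact absurd (mod3_f23_pe h) hL
            · exact h
          exact Finset.mem_image_of_mem _ (Finset.mem_filter.mpr ⟨hz, hpo⟩)
        · intro hx
          obtain ⟨z, hz, rfl⟩ := Finset.mem_image.mp hx
          obtain ⟨hz1, hz2⟩ := Finset.mem_filter.mp hz
          have hx1 : f23 z ∈ b.image Label.bar ∪ c := by
            rw [hcd]; exact Finset.mem_image_of_mem _ hz1
          rcases Finset.mem_union.mp hx1 with h | h
          · exfalso
            obtain ⟨y, hy, hyy⟩ := Finset.mem_image.mp h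
            rw [hb] at hy
            obtain ⟨y', hy', rfl⟩ := Finset.mem_image.mp hy
            have hnm := congrArg Label.name hyy
            rw [name_bar, name_f12, name_f23] at hnm
            have hp1 := (Finset.mem_filter.mp hy').2
            unfold po at hp1 hz2; unfold g12 g23 at hnm
            split_ifs at hnm <;> omega
          · exact h
      have hbarb : b.image Label.bar = (W.filter pe).image f23 := by
        have h1 : b.image Label.bar = (W.image f23) \ c := by
          ext x
          simp only [Finset.mem_sdiff]
          constructor
          · intro hx
            exact ⟨by rw [← hcd]; exact Finset.mem_union_left _ hx,
              Finset.disjoint_left.mp d2 hx⟩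
          · rintro ⟨hx1, hx2⟩
            rcases Finset.mem_union.mp (hcd ▸ hx1) with h | h
            · exact h
            · exact absurd h hx2
        rw [h1, hc, ← Finset.image_sdiff _ _ f23_inj, sdiff_po_eq_pe]
      refine ⟨some V, some W, A₃, B₃, h4, h5, rfl, by simp, ?_, ?_⟩
      · simp only [Option.getD_some]
        refine image_cancel f23_inj ?_
        rw [← hbarb, hb, Finset.image_image, Finset.image_image]
        exact Finset.image_congr fun x hx =>
          (f23_bar_eL_halfL (Finset.mem_filter.mp hx).2).symm
      · simp only [Option.getD_some]
        rw [onAction_phi13Inv,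
          Finset.filter_true_of_mem (fun x hx => by
            have := (hres _ hx).1; rwa [mem_Lab2] at this),
          Finset.image_union, ha, hc, Finset.image_image, Finset.image_image]
        congr 1
        · exact (Finset.image_congr fun x hx =>
            h13L_f12 (Finset.mem_filter.mp hx).2).trans Finset.image_id
        · exact (Finset.image_congr fun x hx =>
            h13L_f23 (Finset.mem_filter.mp hx).2).trans Finset.image_id
  · rintro ⟨u, v, A', B', hA, hB, rfl, hst, hev, hbe⟩
    rcases u with _ | V <;> rcases v with _ | W
    · exact absurd ⟨rfl, rfl⟩ hst
    · -- only B moves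
      simp only [Option.getD_none, Option.getD_some, Finset.filter_empty,
        Finset.empty_union, Finset.image_empty] at hev hbe
      have hAA : A' = A := hA
      subst hAA
      have hWpo : ∀ x ∈ W, po x := fun x hx => by
        rcases pe_or_po x with h | h
        · exfalso
          have hm : x ∈ W.filter pe := Finset.mem_filter.mpr ⟨hx, h⟩
          rw [hev] at hm; simp at hm
        · exact h
      have s1 : Step (B.rename phi23) (W.image f23) (B'.rename phi23) := by
        refine step_cast (Step.rename (hB : Step B W B') fun l _ => ?_) (onAction_phi23 W)
        rw [phi23_toFun]; rfl
      unfold comp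
      refine step_cast (Step.rename (Step.restrict (Step.parR s1) ?_) ?_) ?_
      · intro l hl
        obtain ⟨y, hy, rfl⟩ := Finset.mem_image.mp hl
        have := mod3_f23_po (hWpo y hy)
        constructor <;> rw [mem_Lab2]
        · omega
        · rw [name_bar]; omega
      · intro l hl
        obtain ⟨y, hy, rfl⟩ := Finset.mem_image.mp hl
        rw [phi13Inv_toFun, if_pos (by rw [mod3_f23_po (hWpo y hy)]; omega)]; rfl
      · rw [onAction_phi13Inv,
          Finset.filter_true_of_mem (fun x hx => by
            obtain ⟨y, hy, rfl⟩ := Finset.mem_image.mp hx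
            rw [mod3_f23_po (hWpo y hy)]; omega),
          Finset.image_image]
        have e2 : Finset.image (h13L ∘ f23) W = W :=
          (Finset.image_congr fun x hx => h13L_f23 (hWpo x hx)).trans Finset.image_id
        rw [e2, hbe, Finset.filter_true_of_mem hWpo]
    · -- only A moves
      simp only [Option.getD_some, Option.getD_none, Finset.filter_empty,
        Finset.union_empty, Finset.image_empty] at hev hbe
      have hBB : B' = B := hB
      subst hBB
      have hVpo : V.filter po = ∅ := Finset.image_eq_empty.mp hev.symm
      have hVpe : ∀ x ∈ V, pe x := fun x hx => by
        rcases pe_or_po x with h | h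
        · exact h
        · exfalso
          have hm : x ∈ V.filter po := Finset.mem_filter.mpr ⟨hx, h⟩
          rw [hVpo] at hm; simp at hm
      have s1 : Step (A.rename phi12) (V.image f12) (A'.rename phi12) := by
        refine step_cast (Step.rename (hA : Step A V A') fun l _ => ?_) (onAction_phi12 V)
        rw [phi12_toFun]; rfl
      unfold comp
      refine step_cast (Step.rename (Step.restrict (Step.parL s1) ?_) ?_) ?_
      · intro l hl
        obtain ⟨y, hy, rfl⟩ := Finset.mem_image.mp hl
        have := mod3_f12_pe (hVpe y hy)
        constructor <;> rw [mem_Lab2]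
        · omega
        · rw [name_bar]; omega
      · intro l hl
        obtain ⟨y, hy, rfl⟩ := Finset.mem_image.mp hl
        rw [phi13Inv_toFun, if_pos (by rw [mod3_f12_pe (hVpe y hy)]; omega)]; rfl
      · rw [onAction_phi13Inv,
          Finset.filter_true_of_mem (fun x hx => by
            obtain ⟨y, hy, rfl⟩ := Finset.mem_image.mp hx
            rw [mod3_f12_pe (hVpe y hy)]; omega),
          Finset.image_image]
        have e2 : Finset.image (h13L ∘ f12) V = V :=
          (Finset.image_congr fun x hx => h13L_f12 (hVpe x hx)).trans Finset.image_id
        rw [e2, hbe, Finset.filter_true_of_mem hVpe]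
    · -- both move and synchronize
      simp only [Option.getD_some] at hev hbe
      have s1 : Step (A.rename phi12)
          ((V.filter pe).image f12 ∪ (V.filter po).image f12) (A'.rename phi12) := by
        refine step_cast (Step.rename (hA : Step A V A') fun l _ => ?_) ?_
        · rw [phi12_toFun]; rfl
        · rw [onAction_phi12, ← Finset.image_union, filter_pe_union_po]
      have hbarb : ((V.filter po).image f12).image Label.bar = (W.filter pe).image f23 := by
        rw [Finset.image_image, hev, Finset.image_image]
        exact Finset.image_congr fun x hx =>
          (f23_bar_eL_halfL (Finset.mem_filter.mp hx).2).symm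
      have s2 : Step (B.rename phi23)
          (((V.filter po).image f12).image Label.bar ∪ (W.filter po).image f23)
          (B'.rename phi23) := by
        refine step_cast (Step.rename (hB : Step B W B') fun l _ => ?_) ?_
        · rw [phi23_toFun]; rfl
        · rw [onAction_phi23, hbarb, ← Finset.image_union, filter_pe_union_po]
      unfold comp
      refine step_cast (Step.rename (Step.restrict (Step.sync s1 s2 ?_ ?_ ?_) ?_) ?_) ?_
      · exact disj_by_mod3 (by omega)
          (fun x hx => mod3_f12_pe (Finset.mem_filter.mp hx).2)
          (fun x hx => mod3_f12_po (Finset.mem_filter.mp hx).2)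
      · rw [hbarb]
        exact disj_by_mod3 (by omega)
          (fun x hx => mod3_f23_pe (Finset.mem_filter.mp hx).2)
          (fun x hx => mod3_f23_po (Finset.mem_filter.mp hx).2)
      · exact disj_by_mod3 (by omega)
          (fun x hx => mod3_f12_pe (Finset.mem_filter.mp hx).2)
          (fun x hx => mod3_f23_po (Finset.mem_filter.mp hx).2)
      · intro l hl
        rcases Finset.mem_union.mp hl with h | h
        · obtain ⟨y, hy, rfl⟩ := Finset.mem_image.mp h
          have := mod3_f12_pe (Finset.mem_filter.mp hy).2
          constructor <;> rw [mem_Lab2]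
          · omega
          · rw [name_bar]; omega
        · obtain ⟨y, hy, rfl⟩ := Finset.mem_image.mp h
          have := mod3_f23_po (Finset.mem_filter.mp hy).2
          constructor <;> rw [mem_Lab2]
          · omega
          · rw [name_bar]; omega
      · intro l hl
        rcases Finset.mem_union.mp hl with h | h
        · obtain ⟨y, hy, rfl⟩ := Finset.mem_image.mp h
          rw [phi13Inv_toFun,
            if_pos (by rw [mod3_f12_pe (Finset.mem_filter.mp hy).2]; omega)]; rfl
        · obtain ⟨y, hy, rfl⟩ := Finset.mem_image.mp h
          rw [phi13Inv_toFun,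
            if_pos (by rw [mod3_f23_po (Finset.mem_filter.mp hy).2]; omega)]; rfl
      · rw [onAction_phi13Inv,
          Finset.filter_true_of_mem (fun x hx => by
            rcases Finset.mem_union.mp hx with h | h
            · obtain ⟨y, hy, rfl⟩ := Finset.mem_image.mp h
              rw [mod3_f12_pe (Finset.mem_filter.mp hy).2]; omega
            · obtain ⟨y, hy, rfl⟩ := Finset.mem_image.mp h
              rw [mod3_f23_po (Finset.mem_filter.mp hy).2]; omega),
          Finset.image_union, Finset.image_image, Finset.image_image, hbe]
        congr 1
        · exact (Finset.image_congr fun x hx =>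
            h13L_f12 (Finset.mem_filter.mp hx).2).trans Finset.image_id
        · exact (Finset.image_congr fun x hx =>
            h13L_f23 (Finset.mem_filter.mp hx).2).trans Finset.image_id

end LappComp

namespace LappComp

lemma filter_pe_pe (s : Act) : (s.filter pe).filter pe = s.filter pe :=
  Finset.filter_true_of_mem (fun x hx => (Finset.mem_filter.mp hx).2)

lemma filter_po_po (s : Act) : (s.filter po).filter po = s.filter po :=
  Finset.filter_true_of_mem (fun x hx => (Finset.mem_filter.mp hx).2)

lemma filter_po_pe (s : Act) : (s.filter po).filter pe = ∅ :=
  Finset.filter_false_of_mem (fun x hx hp => by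
    have := (Finset.mem_filter.mp hx).2; unfold po at this; unfold pe at hp; omega)

lemma filter_pe_po (s : Act) : (s.filter pe).filter po = ∅ :=
  Finset.filter_false_of_mem (fun x hx hp => by
    have := (Finset.mem_filter.mp hx).2; unfold pe at this; unfold po at hp; omega)

lemma filter_pe_mix (s t : Act) : (s.filter pe ∪ t.filter po).filter pe = s.filter pe := by
  rw [Finset.filter_union, filter_pe_pe, filter_po_pe, Finset.union_empty]

lemma filter_po_mix (s t : Act) : (s.filter pe ∪ t.filter po).filter po = t.filter po := by
  rw [Finset.filter_union, filter_pe_po, filter_po_po, Finset.empty_union]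

lemma lhs_step_iff {P Q R S : Proc} {α : Act} :
    Step (lapp P (comp Q R)) α S ↔
      ∃ u v w P' Q' R', OStep P u P' ∧ OStep Q v Q' ∧ OStep R w R' ∧
        S = lapp P' (comp Q' R') ∧ TCond u v w α := by
  rw [lapp_step_iff]
  constructor
  · rintro ⟨u, b, P', C', hP, hC, rfl, hst, hev, hal⟩
    rcases b with _ | βc
    · have hCC : C' = comp Q R := hC
      subst hCC
      refine ⟨u, none, none, P', Q, R, hP, rfl, rfl, rfl, ?_, hev, by simp, hal⟩
      rintro ⟨hu, -, -⟩; exact hst ⟨hu, rfl⟩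
    · have hC' : Step (comp Q R) βc C' := hC
      rw [comp_step_iff] at hC'
      obtain ⟨v, w, Q', R', hQ, hR, rfl, hst2, hev2, hbe2⟩ := hC'
      subst hbe2
      simp only [Option.getD_some] at hev hal
      rw [filter_pe_mix] at hev
      rw [filter_po_mix] at hal
      refine ⟨u, v, w, P', Q', R', hP, hQ, hR, rfl, ?_, hev, hev2, hal⟩
      rintro ⟨-, h2, h3⟩; exact hst2 ⟨h2, h3⟩
  · rintro ⟨u, v, w, P', Q', R', hP, hQ, hR, rfl, hst, h1, h2, h3⟩
    by_cases hvw : v = none ∧ w = none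
    · obtain ⟨rfl, rfl⟩ := hvw
      refine ⟨u, none, P', comp Q' R', hP, ?_, rfl, ?_, h1, h3⟩
      · show comp Q' R' = comp Q R
        rw [(hQ : Q' = Q), (hR : R' = R)]
      · rintro ⟨hu, -⟩; exact hst ⟨hu, rfl, rfl⟩
    · refine ⟨u, some ((v.getD ∅).filter pe ∪ (w.getD ∅).filter po), P',
        comp Q' R', hP, ?_, rfl, ?_, ?_, ?_⟩
      · exact (comp_step_iff.mpr ⟨v, w, Q', R', hQ, hR, rfl, hvw, h2, rfl⟩ :
          Step (comp Q R) _ (comp Q' R'))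
      · rintro ⟨-, hcon⟩; cases hcon
      · simp only [Option.getD_some]
        rw [filter_pe_mix]; exact h1
      · simp only [Option.getD_some]
        rw [filter_po_mix]; exact h3

lemma rhs_step_iff {P Q R S : Proc} {α : Act} :
    Step (lapp (lapp P Q) R) α S ↔
      ∃ u v w P' Q' R', OStep P u P' ∧ OStep Q v Q' ∧ OStep R w R' ∧
        S = lapp (lapp P' Q') R' ∧ TCond u v w α := by
  rw [lapp_step_iff]
  constructor
  · rintro ⟨m, w, M', R', hM, hR, rfl, hst, hev, hal⟩
    rcases m with _ | γ
    · have hMM : M' = lapp P Q := hM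
      subst hMM
      refine ⟨none, none, w, P, Q, R', rfl, rfl, hR, rfl, ?_, by simp, ?_, hal⟩
      · rintro ⟨-, -, h3⟩; exact hst ⟨rfl, h3⟩
      · simpa using hev
    · have hM' : Step (lapp P Q) γ M' := hM
      rw [lapp_step_iff] at hM'
      obtain ⟨u, v, P', Q', hP, hQ, rfl, hst2, hev2, hga⟩ := hM'
      subst hga
      simp only [Option.getD_some] at hev
      rw [Finset.image_image] at hev
      refine ⟨u, v, w, P', Q', R', hP, hQ, hR, rfl, ?_, hev2, hev, hal⟩
      rintro ⟨h1, h2, -⟩; exact hst2 ⟨h1, h2⟩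
  · rintro ⟨u, v, w, P', Q', R', hP, hQ, hR, rfl, hst, h1, h2, h3⟩
    by_cases huv : u = none ∧ v = none
    · obtain ⟨rfl, rfl⟩ := huv
      refine ⟨none, w, lapp P' Q', R', ?_, hR, rfl, ?_, by simpa using h2, h3⟩
      · show lapp P' Q' = lapp P Q
        rw [(hP : P' = P), (hQ : Q' = Q)]
      · rintro ⟨-, h4⟩; exact hst ⟨rfl, rfl, h4⟩
    · refine ⟨some (((v.getD ∅).filter po).image halfL), w, lapp P' Q', R',
        ?_, hR, rfl, ?_, ?_, h3⟩
      · exact (lapp_step_iff.mpr ⟨u, v, P', Q', hP, hQ, rfl, huv, h1, rfl⟩ :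
          Step (lapp P Q) _ (lapp P' Q'))
      · rintro ⟨hcon, -⟩; cases hcon
      · simp only [Option.getD_some]
        rw [Finset.image_image]; exact h2

/-! ### Strong bisimulations and failures -/

def IsSB (Rel : Proc → Proc → Prop) : Prop :=
  ∀ ⦃X Y⦄, Rel X Y → ∀ ⦃a X'⦄, Step X a X' → ∃ Y', Step Y a Y' ∧ Rel X' Y'

lemma taustar_sb {Rel : Proc → Proc → Prop} (h : IsSB Rel) {X Y X' : Proc}
    (t : TauStar X X') (r : Rel X Y) : ∃ Y', TauStar Y Y' ∧ Rel X' Y' := by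
  induction t with
  | refl => exact ⟨Y, Relation.ReflTransGen.refl, r⟩
  | tail _ hs ih =>
    obtain ⟨Y₁, hT, hr⟩ := ih
    obtain ⟨Y₂, hst, hr2⟩ := h hr hs
    exact ⟨Y₂, hT.tail hst, hr2⟩

lemma obs_sb {Rel : Proc → Proc → Prop} (h : IsSB Rel) {X Y : Proc} {a : Act} {X' : Proc}
    (o : Obs X a X') (r : Rel X Y) : ∃ Y', Obs Y a Y' ∧ Rel X' Y' := by
  obtain ⟨X₁, X₂, t1, s, t2⟩ := o
  obtain ⟨Y₁, T1, r1⟩ := taustar_sb h t1 r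
  obtain ⟨Y₂, S2, r2⟩ := h r1 s
  obtain ⟨Y₃, T3, r3⟩ := taustar_sb h t2 r2
  exact ⟨Y₃, ⟨Y₁, Y₂, T1, S2, T3⟩, r3⟩

lemma obsseq_sb {Rel : Proc → Proc → Prop} (h : IsSB Rel) {X : Proc} {s : List Act}
    {X' Y : Proc} (o : ObsSeq X s X') (r : Rel X Y) : ∃ Y', ObsSeq Y s Y' ∧ Rel X' Y' := by
  induction o generalizing Y with
  | nil t =>
    obtain ⟨Y', T, r'⟩ := taustar_sb h t r
    exact ⟨Y', .nil T, r'⟩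
  | cons ob _ ih =>
    obtain ⟨Y₁, O1, r1⟩ := obs_sb h ob r
    obtain ⟨Y₂, O2, r2⟩ := ih r1
    exact ⟨Y₂, .cons O1 O2, r2⟩

lemma failures_subset {Rel : Proc → Proc → Prop} (h1 : IsSB Rel)
    (h2 : IsSB (fun a b => Rel b a)) {X Y : Proc} (r : Rel X Y) :
    failures X ⊆ failures Y := by
  rintro ⟨s, F⟩ ⟨hs, hF, T, hseq, href⟩
  obtain ⟨T', hseq', hrel⟩ := obsseq_sb h1 hseq r
  refine ⟨hs, hF, T', hseq', fun a ha hex => ?_⟩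
  obtain ⟨Rr, hR⟩ := hex
  obtain ⟨Rx, hOx, -⟩ := obs_sb h2 hR hrel
  exact href a ha ⟨Rx, hOx⟩

def Rel0 (X Y : Proc) : Prop :=
  ∃ p q r, X = lapp p (comp q r) ∧ Y = lapp (lapp p q) r

lemma rel0_sb : IsSB Rel0 := by
  rintro X Y ⟨p, q, r, rfl, rfl⟩ a X' hstep
  rw [lhs_step_iff] at hstep
  obtain ⟨u, v, w, p', q', r', hp, hq, hr, rfl, ht⟩ := hstep
  exact ⟨lapp (lapp p' q') r',
    rhs_step_iff.mpr ⟨u, v, w, p', q', r', hp, hq, hr, rfl, ht⟩,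
    p', q', r', rfl, rfl⟩

lemma rel0_sb' : IsSB (fun a b => Rel0 b a) := by
  rintro X Y ⟨p, q, r, rfl, rfl⟩ a X' hstep
  rw [rhs_step_iff] at hstep
  obtain ⟨u, v, w, p', q', r', hp, hq, hr, rfl, ht⟩ := hstep
  exact ⟨lapp p' (comp q' r'),
    lhs_step_iff.mpr ⟨u, v, w, p', q', r', hp, hq, hr, rfl, ht⟩,
    p', q', r', rfl, rfl⟩

end LappComp

/-- **Left application is compatible with composition**:
`⟨P | (Q ; R)⟩ ≈_f ⟨⟨P | Q⟩ | R⟩`. -/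
theorem lapp_comp_failures (P Q R : Proc) :
    FailEq (lapp P (comp Q R)) (lapp (lapp P Q) R) := by
  have r0 : LappComp.Rel0 (lapp P (comp Q R)) (lapp (lapp P Q) R) := ⟨P, Q, R, rfl, rfl⟩
  exact Set.Subset.antisymm
    (LappComp.failures_subset LappComp.rel0_sb LappComp.rel0_sb' r0)
    (LappComp.failures_subset LappComp.rel0_sb' LappComp.rel0_sb r0)
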